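/- Local expression of the quasi-Hessian metric (Lemma 3.8): let I ⊔ J = {1,…,n} be a partition, U ⊆ ℝ^I × ℝ^J open, g : U → ℝ a C² function, and ι : U → ℝ^n × ℝ^n the generating-function parametrization. Define the symmetric bilinear form τ on ℝ^n × ℝ^n by τ((a, b), (c, d)) = ½(aᵀd + cᵀb). Then for every point w ∈ U and all u, v ∈ ℝ^I × ℝ^J, τ(Dι_w(u), Dι_w(v)) = u_Iᵀ G_II(w) v_I − u_Jᵀ G_JJ(w) v_J, where G_II(w) = (∂²g/∂x_i∂x_k(w))_{i,k∈I} and G_JJ(w) = (∂²g/∂p_j∂p_l(w))_{j,l∈J}. That is, the quasi-Hessian metric h = ι*τ equals Σ_{i,k∈I} (∂²g/∂x_i∂x_k) dx_i dx_k − Σ_{j,l∈J} (∂²g/∂p_j∂p_l) dp_j dp_l. -/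

import Mathlib

open Matrix

lemma key_alg (n : ℕ) (I : Finset (Fin n)) (M : Fin n → Fin n → ℝ)
    (hM : ∀ i j, M i j = M j i) (u v : Fin n → ℝ) :
    ((∑ k ∈ I, u k * (∑ i, v i * M i k)) + ∑ k ∈ Iᶜ, -(∑ i, u i * M i k) * v k
      + ((∑ k ∈ I, v k * (∑ i, u i * M i k)) + ∑ k ∈ Iᶜ, -(∑ i, v i * M i k) * u k)) / 2
    = (∑ i ∈ I, ∑ k ∈ I, M i k * u i * v k)
      - ∑ j ∈ Iᶜ, ∑ l ∈ Iᶜ, M j l * u j * v l := by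
  have hneg : ∀ a b : Fin n → ℝ,
      ∑ k ∈ Iᶜ, -(∑ i, a i * M i k) * b k = -∑ k ∈ Iᶜ, b k * (∑ i, a i * M i k) := by
    intro a b
    rw [← Finset.sum_neg_distrib]
    exact Finset.sum_congr rfl fun k _ => by ring
  rw [hneg, hneg]
  have hsplit : ∀ (s : Finset (Fin n)) (a b : Fin n → ℝ),
      ∑ k ∈ s, a k * (∑ i, b i * M i k)
        = (∑ k ∈ s, ∑ i ∈ I, a k * (b i * M i k))
          + ∑ k ∈ s, ∑ i ∈ Iᶜ, a k * (b i * M i k) := by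
    intro s a b
    rw [← Finset.sum_add_distrib]
    refine Finset.sum_congr rfl fun k _ => ?_
    rw [← Finset.sum_add_sum_compl I (fun i => b i * M i k), mul_add, Finset.mul_sum,
      Finset.mul_sum]
  have hswap : ∀ (s t : Finset (Fin n)) (a b : Fin n → ℝ),
      ∑ k ∈ s, ∑ i ∈ t, a k * (b i * M i k)
        = ∑ k ∈ t, ∑ i ∈ s, b k * (a i * M i k) := by
    intro s t a b
    rw [Finset.sum_comm]
    exact Finset.sum_congr rfl fun k _ => Finset.sum_congr rfl fun i _ => by
      rw [hM i k]; ring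
  rw [hsplit, hsplit, hsplit, hsplit, hswap I Iᶜ u v, hswap I Iᶜ v u,
    hswap I I u v, hswap Iᶜ Iᶜ u v]
  have h1 : ∑ k ∈ I, ∑ i ∈ I, v k * (u i * M i k) = ∑ i ∈ I, ∑ k ∈ I, M i k * u i * v k := by
    rw [Finset.sum_comm]
    exact Finset.sum_congr rfl fun i _ => Finset.sum_congr rfl fun k _ => by ring
  have h2 : ∑ k ∈ Iᶜ, ∑ i ∈ Iᶜ, v k * (u i * M i k)
      = ∑ j ∈ Iᶜ, ∑ l ∈ Iᶜ, M j l * u j * v l := by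
    rw [Finset.sum_comm]
    exact Finset.sum_congr rfl fun i _ => Finset.sum_congr rfl fun k _ => by ring
  rw [← h1, ← h2]; ring

/-- Local expression of the quasi-Hessian metric (Lemma 3.8): for the
generating-function parametrization `ι` of a generating function `g(x_I, p_J)` and the
pairing `τ((a,b),(c,d)) = ½(aᵀd + cᵀb)`, one has
`τ(Dι_w(u), Dι_w(v)) = u_Iᵀ G_II(w) v_I − u_Jᵀ G_JJ(w) v_J`,
i.e. `h = ι*τ = Σ_{i,k∈I} g_{x_i x_k} dx_i dx_k − Σ_{j,l∈J} g_{p_j p_l} dp_j dp_l`. -/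
theorem quasi_hessian_metric_local_expression (n : ℕ) (I : Finset (Fin n))
    (U : Set (Fin n → ℝ)) (hU : IsOpen U)
    (g : (Fin n → ℝ) → ℝ) (hg : ContDiffOn ℝ 2 g U)
    (dg : (Fin n → ℝ) → Fin n → ℝ)
    (hdg : ∀ w k, dg w k = fderiv ℝ g w (Pi.single k 1))
    (H : (Fin n → ℝ) → Fin n → Fin n → ℝ)
    (hH : ∀ w i j, H w i j
      = fderiv ℝ (fun y => fderiv ℝ g y (Pi.single j 1)) w (Pi.single i 1))
    (ι : (Fin n → ℝ) → (Fin n → ℝ) × (Fin n → ℝ))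
    (hι : ∀ w, ι w = ((fun k => if k ∈ I then w k else -(dg w k)),
                      (fun k => if k ∈ I then dg w k else w k)))
    (τ : ((Fin n → ℝ) × (Fin n → ℝ)) → ((Fin n → ℝ) × (Fin n → ℝ)) → ℝ)
    (hτ : ∀ a c, τ a c = (a.1 ⬝ᵥ c.2 + c.1 ⬝ᵥ a.2) / 2) :
    ∀ w ∈ U, ∀ u v : Fin n → ℝ,
      τ (fderiv ℝ ι w u) (fderiv ℝ ι w v)
        = (∑ i ∈ I, ∑ k ∈ I, H w i k * u i * v k)
          - (∑ j ∈ Iᶜ, ∑ l ∈ Iᶜ, H w j l * u j * v l) := by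
  intro w hw u v
  have hmem : U ∈ nhds w := hU.mem_nhds hw
  have hgw : ContDiffAt ℝ 2 g w := hg.contDiffAt hmem
  set A := fderiv ℝ (fderiv ℝ g) w with hA_def
  have hA : HasFDerivAt (fderiv ℝ g) A w :=
    ((hgw.fderiv_right (m := 1) (by norm_num)).differentiableAt one_ne_zero).hasFDerivAt
  have hDk : ∀ k, HasFDerivAt (fun y => dg y k)
      ((ContinuousLinearMap.apply ℝ ℝ (Pi.single k 1)).comp A) w := by
    intro k
    have h1 : (fun y => dg y k) = fun y => fderiv ℝ g y (Pi.single k 1) :=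
      funext fun y => hdg y k
    rw [h1]
    exact ((ContinuousLinearMap.apply ℝ ℝ (Pi.single k 1)).hasFDerivAt).comp w hA
  set L1 : (Fin n → ℝ) →L[ℝ] (Fin n → ℝ) := ContinuousLinearMap.pi (fun k =>
    if k ∈ I then ContinuousLinearMap.proj k
    else -((ContinuousLinearMap.apply ℝ ℝ (Pi.single k 1)).comp A)) with hL1
  set L2 : (Fin n → ℝ) →L[ℝ] (Fin n → ℝ) := ContinuousLinearMap.pi (fun k =>
    if k ∈ I then (ContinuousLinearMap.apply ℝ ℝ (Pi.single k 1)).comp A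
    else ContinuousLinearMap.proj k) with hL2
  have hι' : HasFDerivAt ι (L1.prod L2) w := by
    have hfun : ι = fun y => ((fun k => if k ∈ I then y k else -(dg y k)),
        (fun k => if k ∈ I then dg y k else y k)) := funext hι
    rw [hfun]
    refine HasFDerivAt.prodMk ?_ ?_
    · refine hasFDerivAt_pi.2 fun k => ?_
      by_cases hk : k ∈ I
      · simpa [hk] using hasFDerivAt_apply (𝕜 := ℝ) k w
      · simpa [hk, Pi.neg_def] using (hDk k).neg
    · refine hasFDerivAt_pi.2 fun k => ?_
      by_cases hk : k ∈ I
      · simpa [hk] using hDk k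
      · simpa [hk] using hasFDerivAt_apply (𝕜 := ℝ) k w
  rw [hι'.fderiv, hτ]
  have hHA : ∀ i k, H w i k = A (Pi.single i 1) (Pi.single k 1) := by
    intro i k
    have h1 : (fun y => fderiv ℝ g y (Pi.single k 1)) = fun y => dg y k :=
      funext fun y => (hdg y k).symm
    rw [hH, h1, (hDk k).fderiv]
    rfl
  have hsym : ∀ i j, H w i j = H w j i := by
    intro i j
    rw [hHA, hHA]
    exact (hgw.isSymmSndFDerivAt (by norm_num)) _ _
  have hAu : ∀ (a : Fin n → ℝ) (k), A a (Pi.single k 1) = ∑ i, a i * H w i k := by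
    intro a k
    have h := LinearMap.pi_apply_eq_sum_univ
      (((ContinuousLinearMap.apply ℝ ℝ (Pi.single k 1)).comp A).toLinearMap) a
    simp only [ContinuousLinearMap.coe_coe, ContinuousLinearMap.comp_apply,
      ContinuousLinearMap.apply_apply, smul_eq_mul] at h
    rw [h]
    refine Finset.sum_congr rfl fun i _ => ?_
    have hs : (fun j => if i = j then (1:ℝ) else 0) = Pi.single i 1 :=
      funext fun j => by simp [Pi.single_apply, eq_comm]
    rw [hs, hHA i k]
  have hL1u : ∀ (a : Fin n → ℝ) (k), L1 a k = if k ∈ I then a k else -(A a (Pi.single k 1)) := by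
    intro a k; by_cases hk : k ∈ I <;> simp [hL1, hk]
  have hL2u : ∀ (a : Fin n → ℝ) (k), L2 a k = if k ∈ I then A a (Pi.single k 1) else a k := by
    intro a k; by_cases hk : k ∈ I <;> simp [hL2, hk]
  simp only [ContinuousLinearMap.prod_apply, dotProduct]
  rw [← Finset.sum_add_sum_compl I (fun k => L1 u k * L2 v k),
    ← Finset.sum_add_sum_compl I (fun k => L1 v k * L2 u k)]
  have c1 : ∑ k ∈ I, L1 u k * L2 v k = ∑ k ∈ I, u k * (∑ i, v i * H w i k) :=
    Finset.sum_congr rfl fun k hk => by rw [hL1u, hL2u, if_pos hk, if_pos hk, hAu]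
  have c2 : ∑ k ∈ Iᶜ, L1 u k * L2 v k = ∑ k ∈ Iᶜ, -(∑ i, u i * H w i k) * v k :=
    Finset.sum_congr rfl fun k hk => by
      rw [hL1u, hL2u, if_neg (Finset.mem_compl.1 hk), if_neg (Finset.mem_compl.1 hk), hAu]
  have c3 : ∑ k ∈ I, L1 v k * L2 u k = ∑ k ∈ I, v k * (∑ i, u i * H w i k) :=
    Finset.sum_congr rfl fun k hk => by rw [hL1u, hL2u, if_pos hk, if_pos hk, hAu]
  have c4 : ∑ k ∈ Iᶜ, L1 v k * L2 u k = ∑ k ∈ Iᶜ, -(∑ i, v i * H w i k) * u k :=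
    Finset.sum_congr rfl fun k hk => by
      rw [hL1u, hL2u, if_neg (Finset.mem_compl.1 hk), if_neg (Finset.mem_compl.1 hk), hAu]
  rw [c1, c2, c3, c4]
  exact key_alg n I (H w) hsym u v
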